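/- Let V be a finite-dimensional real vector space and let g : [0,∞) → L(V) be a semigroup. Then the kernel of g(x) is the same subspace of V for all x > 0; that is, ker(g(x)) = ker(g(y)) for all x, y > 0. -/

import Mathlib

lemma semigroup_pow
    {V : Type*} [AddCommGroup V] [Module ℝ V]
    (g : ℝ → V →ₗ[ℝ] V)
    (hg0 : g 0 = LinearMap.id)
    (hgadd : ∀ x y : ℝ, 0 ≤ x → 0 ≤ y → g (x + y) = g x ∘ₗ g y)
    (t : ℝ) (ht : 0 ≤ t) : ∀ n : ℕ, g (n * t) = (g t) ^ n := by
  intro n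
  induction n with
  | zero => simp only [Nat.cast_zero, zero_mul, pow_zero]; exact hg0
  | succ n ih =>
      have : ((n : ℝ) + 1) * t = n * t + t := by ring
      push_cast
      rw [this, hgadd (n * t) t (by positivity) ht, ih, pow_succ]
      rfl

lemma ker_le
    {V : Type*} [AddCommGroup V] [Module ℝ V] [FiniteDimensional ℝ V]
    (g : ℝ → V →ₗ[ℝ] V)
    (hg0 : g 0 = LinearMap.id)
    (hgadd : ∀ x y : ℝ, 0 ≤ x → 0 ≤ y → g (x + y) = g x ∘ₗ g y)
    (x y : ℝ) (hx : 0 < x) (hy : 0 < y) :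
    LinearMap.ker (g y) ≤ LinearMap.ker (g x) := by
  set d := Module.finrank ℝ V with hd
  -- choose n large
  set n : ℕ := max d ⌈d * y / x⌉₊ + 1 with hn
  have hn1 : 1 ≤ n := Nat.le_add_left 1 _
  have hnd : d ≤ n := le_trans (le_max_left _ _) (Nat.le_succ _)
  have hnpos : (0:ℝ) < n := by exact_mod_cast hn1
  set t : ℝ := y / n with htdef
  have ht : 0 < t := by positivity
  set m : ℕ := ⌊x / t⌋₊ with hm
  have hdm : d ≤ m := by
    have h2 : (⌈(d:ℝ) * y / x⌉₊ : ℝ) ≤ n := by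
      exact_mod_cast le_trans (le_max_right d _) (Nat.le_succ _)
    have hceil : (d:ℝ) * y / x ≤ n := le_trans (Nat.le_ceil _) h2
    rw [div_le_iff₀ hx] at hceil
    rw [hm, Nat.le_floor_iff (by positivity), le_div_iff₀ ht, htdef,
        ← mul_div_assoc, div_le_iff₀ hnpos]
    linarith
  have hmt : (m : ℝ) * t ≤ x := by
    rw [hm]
    have := Nat.floor_le (a := x / t) (by positivity)
    calc (⌊x/t⌋₊ : ℝ) * t ≤ (x / t) * t := by
          exact mul_le_mul_of_nonneg_right this ht.le
      _ = x := by field_simp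
  -- g y = (g t)^n
  have hy' : g y = (g t) ^ n := by
    have : y = (n : ℝ) * t := by
      rw [htdef]; field_simp
    rw [this]; exact semigroup_pow g hg0 hgadd t ht.le n
  -- stabilization
  have hstab : LinearMap.ker ((g t) ^ n) = LinearMap.ker ((g t) ^ m) := by
    rw [Module.End.ker_pow_eq_ker_pow_finrank_of_le hnd,
        Module.End.ker_pow_eq_ker_pow_finrank_of_le hdm]
  -- g x = g r ∘ (g t)^m
  set r : ℝ := x - m * t with hr
  have hr0 : 0 ≤ r := by linarith
  have hx' : g x = g r ∘ₗ (g t) ^ m := by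
    have hxe : x = r + (m : ℝ) * t := by rw [hr]; ring
    rw [hxe, hgadd r ((m:ℝ)*t) hr0 (by positivity),
        semigroup_pow g hg0 hgadd t ht.le m]
  intro v hv
  have hv' : v ∈ LinearMap.ker ((g t) ^ m) := by
    rw [← hstab, ← hy']; exact hv
  have hv'' : ((g t) ^ m) v = 0 := hv'
  simp only [LinearMap.mem_ker, hx', LinearMap.comp_apply, hv'', map_zero]

/-- For a semigroup of linear maps on a finite-dimensional real vector
space, the kernel of `g x` is the same subspace for every `x > 0`. -/
theorem kernel_constant
    {V : Type*} [AddCommGroup V] [Module ℝ V] [FiniteDimensional ℝ V]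
    (g : ℝ → V →ₗ[ℝ] V)
    (hg0 : g 0 = LinearMap.id)
    (hgadd : ∀ x y : ℝ, 0 ≤ x → 0 ≤ y → g (x + y) = g x ∘ₗ g y) :
    ∀ x y : ℝ, 0 < x → 0 < y → LinearMap.ker (g x) = LinearMap.ker (g y) := by
  intro x y hx hy
  exact le_antisymm (ker_le g hg0 hgadd y x hy hx) (ker_le g hg0 hgadd x y hx hy)
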